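/- Let n ≥ 2 and for an integer k let A(k) ∈ SL(n,ℤ) be the matrix with 1's on the diagonal, entry k in position (2,1), and 0 elsewhere (i.e., the block diagonal matrix diag(B(k), I_{n−2}) with B(k) = [[1,0],[k,1]]). If k, l ≥ 1 and there exists X ∈ SL(n,ℤ) with X · A(k) · Xᵀ = A(l), then k = l. -/

import Mathlib

open Matrix

lemma stmt10_aux {n : ℕ} (i j : Fin n) (hij : i ≠ j) (k l : ℤ)
    (Y : Matrix (Fin n) (Fin n) ℤ)
    (hY : Y * (1 + Matrix.single i j k) * Yᵀ = 1 + Matrix.single i j l) :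
    k ∣ l := by
  set D : Matrix (Fin n) (Fin n) ℤ :=
    Matrix.single i j (1:ℤ) - (Matrix.single i j (1:ℤ))ᵀ with hDdef
  have ht : Y * (1 + Matrix.single i j k)ᵀ * Yᵀ = (1 + Matrix.single i j l)ᵀ := by
    calc Y * (1 + Matrix.single i j k)ᵀ * Yᵀ
        = (Y * (1 + Matrix.single i j k) * Yᵀ)ᵀ := by
          simp [Matrix.transpose_mul, Matrix.mul_assoc]
      _ = (1 + Matrix.single i j l)ᵀ := by rw [hY]
  have hsub : Y * (Matrix.single i j k - (Matrix.single i j k)ᵀ) * Yᵀ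
      = Matrix.single i j l - (Matrix.single i j l)ᵀ := by
    have h3 := congrArg₂ (· - ·) hY ht
    simp only [Matrix.transpose_add, Matrix.transpose_one] at h3 ⊢
    rw [show (1 + Matrix.single i j l) - (1 + (Matrix.single i j l)ᵀ)
        = Matrix.single i j l - (Matrix.single i j l)ᵀ by abel] at h3
    rw [← h3]
    rw [Matrix.mul_sub, Matrix.sub_mul, Matrix.mul_add, Matrix.mul_add,
      Matrix.add_mul, Matrix.add_mul]
    abel
  have hDk : Matrix.single i j k - (Matrix.single i j k)ᵀ = k • D := by
    rw [hDdef, smul_sub, ← Matrix.transpose_smul, Matrix.smul_single]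
    norm_num
  have hDl : Matrix.single i j l - (Matrix.single i j l)ᵀ = l • D := by
    rw [hDdef, smul_sub, ← Matrix.transpose_smul, Matrix.smul_single]
    norm_num
  rw [hDk, hDl] at hsub
  have h4 := congrFun (congrFun hsub i) j
  have hDij : D i j = 1 := by
    simp [hDdef, Matrix.transpose_apply, Matrix.single, Ne.symm hij]
  simp only [Matrix.smul_apply, smul_eq_mul, hDij, mul_one] at h4
  rw [Matrix.mul_smul, Matrix.smul_mul] at h4
  refine ⟨(Y * D * Yᵀ) i j, ?_⟩
  simpa using h4.symm

theorem stmt10 (n : ℕ) (hn : 2 ≤ n) (k l : ℤ) (hk : 1 ≤ k) (hl : 1 ≤ l)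
    (X : Matrix (Fin n) (Fin n) ℤ) (hX : X.det = 1)
    (h : X * (1 + Matrix.single ⟨1, by omega⟩ ⟨0, by omega⟩ k) * X.transpose =
      1 + Matrix.single ⟨1, by omega⟩ ⟨0, by omega⟩ l) :
    k = l := by
  set i : Fin n := ⟨1, by omega⟩
  set j : Fin n := ⟨0, by omega⟩
  have hij : i ≠ j := by simp [i, j, Fin.ext_iff]
  have hkl : k ∣ l := stmt10_aux i j hij k l X h
  have hinv1 : X.adjugate * X = 1 := by rw [Matrix.adjugate_mul, hX, one_smul]
  have hinv2 : X * X.adjugate = 1 := by rw [Matrix.mul_adjugate, hX, one_smul]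
  have h2 : X.adjugate * (1 + Matrix.single i j l) * X.adjugateᵀ
      = 1 + Matrix.single i j k := by
    rw [← h]
    have hT : Xᵀ * X.adjugateᵀ = 1 := by
      rw [← Matrix.transpose_mul, hinv1, Matrix.transpose_one]
    calc X.adjugate * (X * (1 + Matrix.single i j k) * Xᵀ) * X.adjugateᵀ
        = (X.adjugate * X) * (1 + Matrix.single i j k) * (Xᵀ * X.adjugateᵀ) := by
          simp only [Matrix.mul_assoc]
      _ = 1 + Matrix.single i j k := by rw [hinv1, hT, Matrix.one_mul, Matrix.mul_one]
  have hlk : l ∣ k := stmt10_aux i j hij l k X.adjugate h2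
  exact Int.dvd_antisymm (by omega) (by omega) hkl hlk
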